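/- Let C be a small category, Y a simplicial set, and δ a twisted structure on C with coefficients in Y. Define, for each n ≥ 1, the homomorphism of free abelian groups ∂_n : ℤ[Y_n × N(C)_n] → ℤ[Y_{n−1} × N(C)_{n−1}] by ∂_n(y, σ) = Σ_{i=0}^n (−1)^i (δ_{v_i}(d_i y), d_i σ), where v_i is the i-th vertex of σ. Then ∂_{n} ∘ ∂_{n+1} = 0 for all n ≥ 1, so these data form a chain complex (the twisted chain complex computing the twisted homology of C). -/

import Mathlib

open CategoryTheory Simplicial

universe u

/-- The `i`-th vertex of an `n`-simplex of the nerve of a small category `C`. -/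
def nerveVertex {C : Type u} [SmallCategory C] {n : ℕ}
    (σ : nerve C _⦋n⦌) (i : Fin (n + 1)) : C :=
  σ.obj i

/-- The twisted face map `d_i^δ(y, σ) = (δ_{v_i}(d_i y), d_i σ)`. -/
def twistedFace {C : Type u} [SmallCategory C] (Y : SSet.{u})
    (δ : C → (Y ⟶ Y)) {n : ℕ} (i : Fin (n + 2)) :
    Y _⦋n + 1⦌ × nerve C _⦋n + 1⦌ → Y _⦋n⦌ × nerve C _⦋n⦌ :=
  fun p => ((δ (nerveVertex p.2 i)).app (Opposite.op (SimplexCategory.mk n)) (Y.δ i p.1),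
    (nerve C).δ i p.2)

/-- The twisted boundary `∂_{n+1} : ℤ[Y_{n+1} × N(C)_{n+1}] → ℤ[Y_n × N(C)_n]`,
`∂(y, σ) = Σᵢ (−1)^i (δ_{v_i}(d_i y), d_i σ)`. -/
noncomputable def twistedBoundary {C : Type u} [SmallCategory C] (Y : SSet.{u})
    (δ : C → (Y ⟶ Y)) (n : ℕ) :
    FreeAbelianGroup (Y _⦋n + 1⦌ × nerve C _⦋n + 1⦌) →+
      FreeAbelianGroup (Y _⦋n⦌ × nerve C _⦋n⦌) :=
  FreeAbelianGroup.lift fun p =>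
    ∑ i : Fin (n + 2), ((-1 : ℤ) ^ (i : ℕ)) • FreeAbelianGroup.of (twistedFace Y δ i p)

lemma twistedFace_comm {C : Type u} [SmallCategory C] (Y : SSet.{u})
    (δ : C → (Y ⟶ Y))
    (hcomm : ∀ v w : C, (Nonempty (v ⟶ w) ∨ Nonempty (w ⟶ v)) →
      δ v ≫ δ w = δ w ≫ δ v)
    {n : ℕ} (i j : Fin (n + 2)) (H : i ≤ j) (p : Y _⦋n + 2⦌ × nerve C _⦋n + 2⦌) :
    twistedFace Y δ i (twistedFace Y δ j.succ p) =
      twistedFace Y δ j (twistedFace Y δ (Fin.castSucc i) p) := by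
  obtain ⟨y, σ⟩ := p
  have hσ : (nerve C).δ i ((nerve C).δ j.succ σ) =
      (nerve C).δ j ((nerve C).δ (Fin.castSucc i) σ) :=
    SSet.δ_comp_δ_apply H σ
  have hy : Y.δ i (Y.δ j.succ y) = Y.δ j (Y.δ (Fin.castSucc i) y) :=
    SSet.δ_comp_δ_apply H y
  have hv1 : nerveVertex ((nerve C).δ j.succ σ) i = σ.obj (Fin.castSucc i) := by
    show σ.obj (j.succ.succAbove i) = _
    rw [Fin.succAbove_of_castSucc_lt _ _ (Fin.castSucc_lt_succ_iff.mpr H)]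
  have hv2 : nerveVertex ((nerve C).δ (Fin.castSucc i) σ) j = σ.obj j.succ := by
    show σ.obj ((Fin.castSucc i).succAbove j) = _
    rw [Fin.succAbove_of_le_castSucc _ _ (by simpa using H)]
  have hmor : Nonempty (σ.obj (Fin.castSucc i) ⟶ σ.obj j.succ) :=
    ⟨σ.map (homOfLE (le_of_lt (Fin.castSucc_lt_succ_iff.mpr H)))⟩
  have hc := hcomm _ _ (Or.inl hmor)
  simp only [twistedFace, hv1, hv2]
  refine Prod.ext ?_ hσ
  dsimp only
  rw [show nerveVertex σ j.succ = σ.obj j.succ from rfl,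
    show nerveVertex σ (Fin.castSucc i) = σ.obj (Fin.castSucc i) from rfl]
  have hnat : ∀ (v : C) (m : ℕ) (k : Fin (m + 2)) (x : Y _⦋m + 1⦌),
      Y.δ k ((δ v).app (Opposite.op (SimplexCategory.mk (m + 1))) x) =
        (δ v).app (Opposite.op (SimplexCategory.mk m)) (Y.δ k x) := fun v m k x =>
    (NatTrans.naturality_apply (δ v) ((SimplexCategory.δ k).op) x).symm
  rw [hnat, hnat, hy]
  exact ConcreteCategory.congr_hom (congr_fun (congr_arg NatTrans.app (hc.symm))
    (Opposite.op (SimplexCategory.mk n))) _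

/-- for a twisted structure `δ` on a small category `C` with coefficients in a
simplicial set `Y`, the twisted boundaries satisfy `∂_n ∘ ∂_{n+1} = 0`, so the free abelian
groups `ℤ[Y_n × N(C)_n]` form a chain complex (computing the twisted homology of `C`). -/
theorem twistedBoundary_comp_twistedBoundary {C : Type u} [SmallCategory C] (Y : SSet.{u})
    (δ : C → (Y ⟶ Y))
    (hcomm : ∀ v w : C, (Nonempty (v ⟶ w) ∨ Nonempty (w ⟶ v)) →
      δ v ≫ δ w = δ w ≫ δ v)
    (n : ℕ) :
    (twistedBoundary Y δ n).comp (twistedBoundary Y δ (n + 1)) = 0 := by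
  ext p
  simp only [AddMonoidHom.comp_apply, AddMonoidHom.zero_apply, twistedBoundary,
    FreeAbelianGroup.lift_apply_of, map_sum, map_zsmul, Finset.smul_sum, smul_smul]
  rw [Finset.sum_comm]
  rw [← Finset.sum_product']
  let P := Fin (n + 2) × Fin (n + 3)
  let S := Finset.univ.filter fun ij : P => (ij.2 : ℕ) ≤ (ij.1 : ℕ)
  erw [← Finset.sum_add_sum_compl S, ← eq_neg_iff_add_eq_zero, ← Finset.sum_neg_distrib]
  let φ : ∀ ij : P, ij ∈ S → P := fun ij hij =>
    (Fin.castLT ij.2 (lt_of_le_of_lt (Finset.mem_filter.mp hij).right (Fin.is_lt ij.1)), ij.1.succ)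
  apply Finset.sum_bij φ
  · intro ij hij
    simp only [S, φ, Finset.mem_univ, Finset.compl_filter, Finset.mem_filter, true_and,
      Fin.val_succ, Fin.coe_castLT] at hij ⊢
    omega
  · rintro ⟨i, j⟩ hij ⟨i', j'⟩ hij' h
    rw [Prod.mk_inj]
    exact ⟨by simpa [φ] using congr_arg Prod.snd h,
      by simpa [φ, Fin.castSucc_castLT] using congr_arg Fin.castSucc (congr_arg Prod.fst h)⟩
  · rintro ⟨i', j'⟩ hij'
    simp only [S, Finset.mem_univ, forall_true_left, Prod.forall, Finset.compl_filter,
      not_le, Finset.mem_filter, true_and] at hij'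
    refine ⟨(j'.pred <| ?_, Fin.castSucc i'), ?_, ?_⟩
    · rintro rfl
      simp only [Fin.val_zero, not_lt_zero'] at hij'
    · simpa only [S, Finset.mem_univ, forall_true_left, Prod.forall, Finset.mem_filter,
        Fin.coe_castSucc, Fin.coe_pred, true_and] using Nat.le_sub_one_of_lt hij'
    · simp only [φ, Fin.castLT_castSucc, Fin.succ_pred]
  · rintro ⟨i, j⟩ hij
    simp only [S, Finset.mem_univ, Finset.mem_filter, true_and] at hij
    have hle : Fin.castLT j (lt_of_le_of_lt hij (Fin.is_lt i)) ≤ i := by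
      simpa [Fin.le_def] using hij
    have hkey := twistedFace_comm Y δ hcomm _ i hle p
    simp only [φ]
    rw [hkey, Fin.castSucc_castLT]
    rw [← neg_smul]
    congr 1
    simp only [Fin.val_succ, Fin.coe_castLT, pow_add, pow_one]
    ring
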